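/- Let w ∈ ℍ and θ ∈ ℝ. Then there exist ε₀ > 0 and functions z₊, z₋ : (0, ε₀) → ℂ such that for all ε ∈ (0, ε₀), z₊(ε) and z₋(ε) are critical points of g_{w,ε,θ} (i.e. g'_{w,ε,θ}(z±(ε)) = 0), and z₊(ε) = w + i(ε/4)e^{iθ} + O(ε²), z₋(ε) = w − i(ε/4)e^{iθ} + O(ε²) as ε → 0⁺. (These are the branch points of g_{w,ε,θ} in the upper half-plane, which any admissible domain D_{w,ε} must contain.) -/

import Mathlib

open Complex Real Filter Asymptotics Topology

noncomputable section

/-- Auxiliary: solve the branch point equation near `v₀ = ±I`. -/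
lemma branch_aux (a : ℂ) (ha : a ≠ 0) (θ : ℝ) (v₀ : ℂ) (hv₀ : v₀ ^ 2 = -1) :
    ∃ ε₀ K : ℝ, 0 < ε₀ ∧ 0 < K ∧ ∃ vf : ℝ → ℂ,
      ∀ ε ∈ Set.Ioo (0:ℝ) ε₀,
        ((vf ε) * (vf ε) + 1) * ((a - (ε:ℂ) * (Complex.exp ((θ:ℂ) * Complex.I)/4) * vf ε)
            * (a - (ε:ℂ) * (Complex.exp ((θ:ℂ) * Complex.I)/4) * vf ε))
          + ((ε:ℂ) * (ε:ℂ) * (Complex.exp (-(2 * (θ:ℂ)) * Complex.I)/16)) * (vf ε * vf ε) = 0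
        ∧ ‖vf ε - v₀‖ ≤ K * ε
        ∧ vf ε ≠ 0
        ∧ a - (ε:ℂ) * (Complex.exp ((θ:ℂ) * Complex.I)/4) * vf ε ≠ 0 := by
  have hv₀ne : v₀ ≠ 0 := by
    intro h; rw [h] at hv₀; norm_num at hv₀
  have hnv₀ : ‖v₀‖ = 1 := by
    have : ‖v₀‖ ^ 2 = 1 := by
      rw [← norm_pow, hv₀]; simp
    nlinarith [norm_nonneg v₀]
  set c : ℂ := Complex.exp ((θ:ℂ) * Complex.I) / 4 with hc
  set k : ℂ := Complex.exp (-(2 * (θ:ℂ)) * Complex.I) / 16 with hk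
  have hcne : c ≠ 0 := by
    simp [hc, Complex.exp_ne_zero]
  have hcnorm : ‖c‖ = 1/4 := by
    rw [hc, norm_div]
    simp [Complex.norm_exp_ofReal_mul_I]
  set G : ℝ × ℂ → ℂ := fun p =>
    (p.2 * p.2 + 1) * ((a - (p.1:ℂ) * c * p.2) * (a - (p.1:ℂ) * c * p.2))
      + ((p.1:ℂ) * (p.1:ℂ) * k) * (p.2 * p.2) with hG
  set B : ℂ := 2 * v₀ * (a * a) with hB
  have hBne : B ≠ 0 := by
    simp [hB, hv₀ne, ha]
  set p₀ : ℝ × ℂ := ((0:ℝ), v₀) with hp₀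
  -- derivative pieces
  have hu : HasStrictFDerivAt (fun p : ℝ × ℂ => p.2) (ContinuousLinearMap.snd ℝ ℝ ℂ) p₀ :=
    hasStrictFDerivAt_snd
  have he : HasStrictFDerivAt (fun p : ℝ × ℂ => ((p.1 : ℝ) : ℂ))
      (Complex.ofRealCLM.comp (ContinuousLinearMap.fst ℝ ℝ ℂ)) p₀ :=
    Complex.ofRealCLM.hasStrictFDerivAt.comp p₀ hasStrictFDerivAt_fst
  have hs : HasStrictFDerivAt (fun p : ℝ × ℂ => a - (p.1:ℂ) * c * p.2) _ p₀ :=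
    (((he.mul_const c).mul hu)).const_sub a
  have hGd : HasStrictFDerivAt G _ p₀ :=
    (((hu.mul hu).add_const 1).mul (hs.mul hs)).add
      (((he.mul he).mul_const k).mul (hu.mul hu))
  have hGd' : HasStrictFDerivAt G (B • ContinuousLinearMap.snd ℝ ℝ ℂ) p₀ := by
    refine hGd.congr_fderiv (Eq.symm ?_)
    apply ContinuousLinearMap.ext
    rintro ⟨x, y⟩
    simp [hp₀, hB, ContinuousLinearMap.smul_apply, ContinuousLinearMap.add_apply,
      ContinuousLinearMap.comp_apply, smul_eq_mul]
    linear_combination (2*a*v₀*c*(x:ℂ)) * hv₀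
  set eB : ℂ ≃L[ℝ] ℂ :=
    (((ContinuousLinearEquiv.unitsEquivAut ℂ (Units.mk0 B hBne)).toLinearEquiv.restrictScalars
      ℝ).toContinuousLinearEquiv) with heB
  set L : (ℝ × ℂ) ≃L[ℝ] ℝ × ℂ := (ContinuousLinearEquiv.refl ℝ ℝ).prodCongr eB with hL
  have hΦ : HasStrictFDerivAt (fun p : ℝ × ℂ => (p.1, G p))
      (L : (ℝ × ℂ) →L[ℝ] ℝ × ℂ) p₀ := by
    refine (HasStrictFDerivAt.prodMk hasStrictFDerivAt_fst hGd').congr_fderiv (Eq.symm ?_)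
    apply ContinuousLinearMap.ext
    rintro ⟨x, y⟩
    simp [hL, heB, ContinuousLinearMap.prod_apply, mul_comm]
  have hG0 : G p₀ = 0 := by
    have h' : G p₀ = (v₀ * v₀ + 1) * (a * a) := by
      simp [hG, hp₀]
    rw [h']
    linear_combination (a*a) * hv₀
  have hΦp : ((p₀.1 : ℝ), G p₀) = ((0:ℝ), (0:ℂ)) := by
    rw [hG0, hp₀]
  set ψ := hΦ.localInverse _ _ _ with hψ
  have hinv : ∀ᶠ y in 𝓝 ((0:ℝ), (0:ℂ)), (fun p : ℝ × ℂ => (p.1, G p)) (ψ y) = y := by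
    have h := hΦ.eventually_right_inverse
    rwa [hΦp] at h
  have hψ0 : ψ ((0:ℝ), (0:ℂ)) = p₀ := by
    have h := hΦ.localInverse_apply_image
    rwa [hΦp] at h
  obtain ⟨K, s, hs_mem, hlips⟩ := hΦ.to_localInverse.exists_lipschitzOnWith
  rw [hΦp] at hs_mem
  obtain ⟨r₁, hr₁, hball₁⟩ := Metric.mem_nhds_iff.mp hs_mem
  obtain ⟨r₂, hr₂, hball₂⟩ := Metric.eventually_nhds_iff_ball.mp hinv
  set Kp : ℝ := (K : ℝ) + 1 with hKp
  have hKp0 : 0 < Kp := by positivity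
  have hapos : (0:ℝ) < ‖a‖ := norm_pos_iff.mpr ha
  refine ⟨min (min r₁ r₂) (min (1 / (2 * Kp)) ‖a‖), Kp,
    lt_min (lt_min hr₁ hr₂) (lt_min (by positivity) hapos), hKp0,
    fun ε => (ψ (ε, 0)).2, ?_⟩
  rintro ε ⟨hε0, hεlt⟩
  have hd : dist ((ε:ℝ), (0:ℂ)) ((0:ℝ), (0:ℂ)) = ε := by
    simp [Prod.dist_eq, Real.dist_eq, abs_of_pos hε0, Prod.norm_def, Real.norm_eq_abs]
    linarith
  have hmem2 : ((ε:ℝ), (0:ℂ)) ∈ Metric.ball ((0:ℝ), (0:ℂ)) r₂ := by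
    rw [Metric.mem_ball, hd]
    exact lt_of_lt_of_le hεlt (le_trans (min_le_left _ _) (min_le_right _ _))
  have heq := hball₂ _ hmem2
  have h1 : (ψ (ε, 0)).1 = ε := congrArg Prod.fst heq
  have h2 : G (ψ (ε, 0)) = 0 := congrArg Prod.snd heq
  have hmem1 : ((ε:ℝ), (0:ℂ)) ∈ s := by
    apply hball₁
    rw [Metric.mem_ball, hd]
    exact lt_of_lt_of_le hεlt (le_trans (min_le_left _ _) (min_le_left _ _))
  have h0mem : ((0:ℝ), (0:ℂ)) ∈ s := mem_of_mem_nhds hs_mem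
  have hdist := hlips.dist_le_mul _ hmem1 _ h0mem
  rw [← hψ, hψ0, hd] at hdist
  have hb : ‖(ψ (ε, 0)).2 - v₀‖ ≤ (K:ℝ) * ε := by
    refine le_trans ?_ hdist
    have hle : dist (ψ (ε,0)).2 p₀.2 ≤ dist (ψ (ε,0)) p₀ := by
      rw [Prod.dist_eq]; exact le_max_right _ _
    simpa [hp₀, dist_eq_norm] using hle
  have hbK : ‖(ψ (ε, 0)).2 - v₀‖ ≤ Kp * ε := le_trans hb (by nlinarith)
  have hsmall : ‖(ψ (ε, 0)).2 - v₀‖ ≤ 1/2 := by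
    have hεle : ε ≤ 1/(2*Kp) :=
      le_of_lt (lt_of_lt_of_le hεlt (le_trans (min_le_right _ _) (min_le_left _ _)))
    have h3 : Kp * ε ≤ 1/2 := by
      calc Kp * ε ≤ Kp * (1/(2*Kp)) := by nlinarith
      _ = 1/2 := by field_simp
    linarith
  have hvne : (ψ (ε, 0)).2 ≠ 0 := by
    intro h0
    rw [h0, zero_sub, norm_neg, hnv₀] at hsmall
    linarith
  have hvnorm : ‖(ψ (ε, 0)).2‖ ≤ 3/2 := by
    have := norm_sub_norm_le (ψ (ε, 0)).2 v₀
    rw [hnv₀] at this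
    linarith
  have htne : a - (ε:ℂ) * c * (ψ (ε, 0)).2 ≠ 0 := by
    intro h0
    have h0' : a = (ε:ℂ) * c * (ψ (ε, 0)).2 := by
      rw [← sub_eq_zero]; exact h0
    have hna : ‖a‖ ≤ ε * (1/4) * (3/2) := by
      rw [h0', norm_mul, norm_mul, hcnorm, Complex.norm_real, Real.norm_eq_abs,
        abs_of_pos hε0]
      gcongr
    have hεla : ε < ‖a‖ := lt_of_lt_of_le hεlt (le_trans (min_le_right _ _) (min_le_right _ _))
    nlinarith
  refine ⟨?_, hbK, hvne, htne⟩
  have hψp : ψ (ε, 0) = ((ε:ℝ), (ψ (ε, 0)).2) := Prod.ext h1 rfl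
  rw [hψp, hG] at h2
  exact h2

end

lemma deriv_aux (b₁ b₂ C₁ C₂ kc kd : ℂ) (z : ℂ) (h1 : b₁ - z ≠ 0) (h2 : b₂ - z ≠ 0) :
    deriv (fun z => z + C₁ / (b₁ - z) + C₂ / (b₂ - z) - kc - kd) z
      = 1 + C₁ / (b₁ - z) ^ 2 + C₂ / (b₂ - z) ^ 2 := by
  have i1 : HasDerivAt (fun z : ℂ => b₁ - z) (-1) z := (hasDerivAt_id z).const_sub b₁
  have i2 : HasDerivAt (fun z : ℂ => b₂ - z) (-1) z := (hasDerivAt_id z).const_sub b₂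
  have i1' := (i1.inv h1).const_mul C₁
  have i2' := (i2.inv h2).const_mul C₂
  have hd := ((((hasDerivAt_id z).add i1').add i2').sub_const kc).sub_const kd
  have hd' : HasDerivAt (fun z : ℂ => z + C₁ * (b₁ - z)⁻¹ + C₂ * (b₂ - z)⁻¹ - kc - kd)
      (1 + C₁ * (-(-1) / (b₁ - z) ^ 2) + C₂ * (-(-1) / (b₂ - z) ^ 2)) z := hd
  simp only [div_eq_mul_inv]
  rw [hd'.deriv]
  ring

lemma crit (w : ℂ) (θ : ℝ) (ε : ℝ) (hε : ε ≠ 0) (gε : ℂ → ℂ)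
    (hg : ∀ z : ℂ, gε z = z
        + ((ε : ℂ) ^ 2 / 16) * Complex.exp (2 * (θ : ℂ) * Complex.I) / (w - z)
        + ((ε : ℂ) ^ 2 / 16) * Complex.exp (-(2 * (θ : ℂ)) * Complex.I) / (starRingEnd ℂ w - z)
        - ((ε : ℂ) ^ 2 / 16) * Complex.exp (2 * (θ : ℂ) * Complex.I) / w
        - ((ε : ℂ) ^ 2 / 16) * Complex.exp (-(2 * (θ : ℂ)) * Complex.I) / starRingEnd ℂ w)
    (v : ℂ) (hv : v ≠ 0)
    (ht : (starRingEnd ℂ w - w) - (ε:ℂ) * (Complex.exp ((θ:ℂ) * Complex.I)/4) * v ≠ 0)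
    (heq : (v * v + 1) * (((starRingEnd ℂ w - w) - (ε:ℂ) * (Complex.exp ((θ:ℂ)*Complex.I)/4) * v)
            * ((starRingEnd ℂ w - w) - (ε:ℂ) * (Complex.exp ((θ:ℂ)*Complex.I)/4) * v))
          + ((ε:ℂ) * (ε:ℂ) * (Complex.exp (-(2 * (θ:ℂ)) * Complex.I)/16)) * (v * v) = 0) :
    deriv gε (w + (ε:ℂ) * (Complex.exp ((θ:ℂ) * Complex.I)/4) * v) = 0 := by
  have hgf : gε = fun z => z
      + ((ε : ℂ) ^ 2 / 16) * Complex.exp (2 * (θ : ℂ) * Complex.I) / (w - z)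
      + ((ε : ℂ) ^ 2 / 16) * Complex.exp (-(2 * (θ : ℂ)) * Complex.I) / (starRingEnd ℂ w - z)
      - ((ε : ℂ) ^ 2 / 16) * Complex.exp (2 * (θ : ℂ) * Complex.I) / w
      - ((ε : ℂ) ^ 2 / 16) * Complex.exp (-(2 * (θ : ℂ)) * Complex.I) / starRingEnd ℂ w :=
    funext hg
  set z : ℂ := w + (ε:ℂ) * (Complex.exp ((θ:ℂ) * Complex.I)/4) * v with hz
  have hεC : ((ε:ℝ):ℂ) ≠ 0 := Complex.ofReal_ne_zero.mpr hε
  have hEne : Complex.exp ((θ:ℂ) * Complex.I) ≠ 0 := Complex.exp_ne_zero _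
  have h1val : w - z = -((ε:ℂ) * (Complex.exp ((θ:ℂ) * Complex.I)/4) * v) := by
    rw [hz]; ring
  have h1 : w - z ≠ 0 := by
    rw [h1val]
    simp [hεC, hv, hEne]
  have h2val : starRingEnd ℂ w - z
      = (starRingEnd ℂ w - w) - (ε:ℂ) * (Complex.exp ((θ:ℂ) * Complex.I)/4) * v := by
    rw [hz]; ring
  have h2 : starRingEnd ℂ w - z ≠ 0 := by rw [h2val]; exact ht
  rw [hgf]
  rw [deriv_aux w (starRingEnd ℂ w) _ _ _ _ z h1 h2]
  rw [h1val, h2val]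
  have hE2 : Complex.exp (2 * (θ:ℂ) * Complex.I) = Complex.exp ((θ:ℂ) * Complex.I) ^ 2 := by
    rw [← Complex.exp_nat_mul]
    congr 1
    push_cast
    ring
  have hE3 : Complex.exp (-(2 * (θ:ℂ)) * Complex.I)
      = (Complex.exp ((θ:ℂ) * Complex.I) ^ 2)⁻¹ := by
    rw [← hE2, ← Complex.exp_neg]
    congr 1
    ring
  rw [hE2, hE3]
  rw [hE3] at heq
  set t : ℂ := (starRingEnd ℂ w - w) - (ε:ℂ) * (Complex.exp ((θ:ℂ) * Complex.I)/4) * v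
    with htt
  clear_value t
  field_simp [hεC, hv, hEne, ht] at heq ⊢
  linear_combination heq


/-- For small `ε > 0`, the map `g_{w,ε,θ}` has two critical points (branch points)
`z₊(ε) = w + i(ε/4)e^{iθ} + O(ε²)` and `z₋(ε) = w - i(ε/4)e^{iθ} + O(ε²)` in the
upper half-plane. -/
theorem stmt8 (w : ℂ) (hw : 0 < w.im) (θ : ℝ)
    (g : ℝ → ℂ → ℂ)
    (hg : ∀ (ε : ℝ) (z : ℂ), g ε z = z
        + ((ε : ℂ) ^ 2 / 16) * Complex.exp (2 * (θ : ℂ) * Complex.I) / (w - z)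
        + ((ε : ℂ) ^ 2 / 16) * Complex.exp (-(2 * (θ : ℂ)) * Complex.I) / (starRingEnd ℂ w - z)
        - ((ε : ℂ) ^ 2 / 16) * Complex.exp (2 * (θ : ℂ) * Complex.I) / w
        - ((ε : ℂ) ^ 2 / 16) * Complex.exp (-(2 * (θ : ℂ)) * Complex.I) / starRingEnd ℂ w) :
    ∃ ε₀ : ℝ, 0 < ε₀ ∧ ∃ zp zm : ℝ → ℂ,
      (∀ ε ∈ Set.Ioo (0 : ℝ) ε₀, deriv (g ε) (zp ε) = 0 ∧ deriv (g ε) (zm ε) = 0) ∧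
      ((fun ε : ℝ => zp ε - (w + Complex.I * ((ε : ℂ) / 4) * Complex.exp ((θ : ℂ) * Complex.I)))
        =O[nhdsWithin 0 (Set.Ioi 0)] fun ε : ℝ => ε ^ 2) ∧
      ((fun ε : ℝ => zm ε - (w - Complex.I * ((ε : ℂ) / 4) * Complex.exp ((θ : ℂ) * Complex.I)))
        =O[nhdsWithin 0 (Set.Ioi 0)] fun ε : ℝ => ε ^ 2) := by
  have ha : starRingEnd ℂ w - w ≠ 0 := by
    intro h
    have h' : starRingEnd ℂ w = w := sub_eq_zero.mp h
    have := Complex.conj_eq_iff_im.mp h'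
    linarith
  obtain ⟨ε₁, K₁, hε₁, hK₁, vf₁, h₁⟩ := branch_aux _ ha θ Complex.I Complex.I_sq
  obtain ⟨ε₂, K₂, hε₂, hK₂, vf₂, h₂⟩ :=
    branch_aux _ ha θ (-Complex.I) (by rw [neg_sq]; exact Complex.I_sq)
  have hnc : ‖Complex.exp ((θ:ℂ) * Complex.I) / 4‖ = 1/4 := by
    rw [norm_div]
    simp [Complex.norm_exp_ofReal_mul_I]
  have hIoo : Set.Ioo (0:ℝ) (min ε₁ ε₂) ∈ nhdsWithin (0:ℝ) (Set.Ioi 0) :=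
    Ioo_mem_nhdsGT_of_mem ⟨le_refl 0, lt_min hε₁ hε₂⟩
  refine ⟨min ε₁ ε₂, lt_min hε₁ hε₂,
    fun ε => w + (ε:ℂ) * (Complex.exp ((θ:ℂ) * Complex.I)/4) * vf₁ ε,
    fun ε => w + (ε:ℂ) * (Complex.exp ((θ:ℂ) * Complex.I)/4) * vf₂ ε, ?_, ?_, ?_⟩
  · rintro ε ⟨hε0, hεlt⟩
    obtain ⟨heq1, hb1, hv1, ht1⟩ := h₁ ε ⟨hε0, lt_of_lt_of_le hεlt (min_le_left _ _)⟩
    obtain ⟨heq2, hb2, hv2, ht2⟩ := h₂ ε ⟨hε0, lt_of_lt_of_le hεlt (min_le_right _ _)⟩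
    exact ⟨crit w θ ε (ne_of_gt hε0) (g ε) (hg ε) _ hv1 ht1 heq1,
      crit w θ ε (ne_of_gt hε0) (g ε) (hg ε) _ hv2 ht2 heq2⟩
  · rw [isBigO_iff]
    refine ⟨K₁, ?_⟩
    filter_upwards [hIoo] with ε hε
    obtain ⟨hε0, hεlt⟩ := hε
    obtain ⟨heq1, hb1, hv1, ht1⟩ := h₁ ε ⟨hε0, lt_of_lt_of_le hεlt (min_le_left _ _)⟩
    have hrw : w + (ε:ℂ) * (Complex.exp ((θ:ℂ) * Complex.I)/4) * vf₁ ε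
        - (w + Complex.I * ((ε:ℂ)/4) * Complex.exp ((θ:ℂ) * Complex.I))
        = (ε:ℂ) * (Complex.exp ((θ:ℂ) * Complex.I)/4) * (vf₁ ε - Complex.I) := by ring
    rw [hrw, norm_mul, norm_mul, hnc, Complex.norm_real, Real.norm_eq_abs,
      abs_of_pos hε0, Real.norm_eq_abs, abs_of_pos (by positivity : (0:ℝ) < ε^2)]
    nlinarith [norm_nonneg (vf₁ ε - Complex.I)]
  · rw [isBigO_iff]
    refine ⟨K₂, ?_⟩
    filter_upwards [hIoo] with ε hε
    obtain ⟨hε0, hεlt⟩ := hε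
    obtain ⟨heq2, hb2, hv2, ht2⟩ := h₂ ε ⟨hε0, lt_of_lt_of_le hεlt (min_le_right _ _)⟩
    have hrw : w + (ε:ℂ) * (Complex.exp ((θ:ℂ) * Complex.I)/4) * vf₂ ε
        - (w - Complex.I * ((ε:ℂ)/4) * Complex.exp ((θ:ℂ) * Complex.I))
        = (ε:ℂ) * (Complex.exp ((θ:ℂ) * Complex.I)/4) * (vf₂ ε - -Complex.I) := by ring
    rw [hrw, norm_mul, norm_mul, hnc, Complex.norm_real, Real.norm_eq_abs,
      abs_of_pos hε0, Real.norm_eq_abs, abs_of_pos (by positivity : (0:ℝ) < ε^2)]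
    nlinarith [norm_nonneg (vf₂ ε - -Complex.I)]
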